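/- For the second-order system obtained by differentiating a planar autonomous system, the deviation curvature matrix is given by P(x,y) = (1/2)·M(x,y) + (1/4)·J(x)², where M(x,y) is the 2×2 matrix whose first row is the transpose of (Hess f)(x)·y and whose second row is the transpose of (Hess g)(x)·y, and J(x) is the Jacobian matrix of (f,g) at x. (Proposition 3.1.) -/

import Mathlib

open Matrix

noncomputable def pd (i : Fin 2) (φ : (Fin 2 → ℝ) → ℝ) (x : Fin 2 → ℝ) : ℝ :=
  fderiv ℝ φ x (Pi.single i 1)

lemma fderiv_diff {φ : (Fin 2 → ℝ) → ℝ} (hφ : ContDiff ℝ 2 φ) (x : Fin 2 → ℝ) :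
    DifferentiableAt ℝ (fderiv ℝ φ) x :=
  ((hφ.fderiv_right (m := 1) (by norm_num)).differentiable (by norm_num)).differentiableAt

lemma pd_diff {φ : (Fin 2 → ℝ) → ℝ} (hφ : ContDiff ℝ 2 φ) (i : Fin 2) (x : Fin 2 → ℝ) :
    DifferentiableAt ℝ (pd i φ) x := by
  have h := (fderiv_diff hφ x).clm_apply (differentiableAt_const (Pi.single i (1:ℝ)))
  exact h

lemma pd_pd {φ : (Fin 2 → ℝ) → ℝ} (hφ : ContDiff ℝ 2 φ) (i j : Fin 2) (x : Fin 2 → ℝ) :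
    pd j (pd i φ) x = fderiv ℝ (fderiv ℝ φ) x (Pi.single j 1) (Pi.single i 1) := by
  have h := ((fderiv_diff hφ x).hasFDerivAt).clm_apply
    (hasFDerivAt_const (Pi.single i (1:ℝ)) x)
  have he : pd i φ = fun x' => (fderiv ℝ φ x') (Pi.single i 1) := rfl
  simp only [pd, he, h.fderiv]
  simp

lemma pd_symm {φ : (Fin 2 → ℝ) → ℝ} (hφ : ContDiff ℝ 2 φ) (i j : Fin 2) (x : Fin 2 → ℝ) :
    pd j (pd i φ) x = pd i (pd j φ) x := by
  rw [pd_pd hφ, pd_pd hφ]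
  exact second_derivative_symmetric
    (fun y => ((hφ.differentiable (by norm_num)) y).hasFDerivAt)
    ((fderiv_diff hφ x).hasFDerivAt) _ _

lemma pd_comb {u v : (Fin 2 → ℝ) → ℝ} {x : Fin 2 → ℝ}
    (hu : DifferentiableAt ℝ u x) (hv : DifferentiableAt ℝ v x) (a b c : ℝ) (j : Fin 2) :
    pd j (fun x' => c * (u x' * a + v x' * b)) x = c * (pd j u x * a + pd j v x * b) := by
  have h : HasFDerivAt (fun x' => c * (u x' * a + v x' * b)) _ x := (((hu.hasFDerivAt.mul_const a).add (hv.hasFDerivAt.mul_const b)).const_mul c)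
  simp only [pd, h.fderiv]
  simp [mul_comm, mul_add]

lemma pd_cmul {u : (Fin 2 → ℝ) → ℝ} {x : Fin 2 → ℝ}
    (hu : DifferentiableAt ℝ u x) (c : ℝ) (j : Fin 2) :
    pd j (fun x' => c * u x') x = c * pd j u x := by
  have h := hu.hasFDerivAt.const_mul c
  simp [pd, h.fderiv]

lemma entry {φ : (Fin 2 → ℝ) → ℝ} (hφ : ContDiff ℝ 2 φ) (y : Fin 2 → ℝ) (j : Fin 2)
    (x : Fin 2 → ℝ) :
    -2 * pd j (fun x' => -(1/2) * (pd 0 φ x' * y 0 + pd 1 φ x' * y 1)) x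
    + (y 0 * pd 0 (fun x' => -(1/2) * pd j φ x') x
       + y 1 * pd 1 (fun x' => -(1/2) * pd j φ x') x)
    = 1/2 * (pd 0 (fun x' => pd j φ x') x * y 0 + pd 1 (fun x' => pd j φ x') x * y 1) := by
  rw [pd_comb (pd_diff hφ 0 x) (pd_diff hφ 1 x),
    pd_cmul (pd_diff hφ j x) (-(1/2)) 0, pd_cmul (pd_diff hφ j x) (-(1/2)) 1]
  show -2 * (-(1/2) * (pd j (pd 0 φ) x * y 0 + pd j (pd 1 φ) x * y 1)) + _
    = 1/2 * (pd 0 (pd j φ) x * y 0 + pd 1 (pd j φ) x * y 1)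
  rw [pd_symm hφ 0 j x, pd_symm hφ 1 j x]
  ring

theorem deviation_curvature_of_planar_system
    (f g : (Fin 2 → ℝ) → ℝ) (hf : ContDiff ℝ 2 f) (hg : ContDiff ℝ 2 g)
    (J : (Fin 2 → ℝ) → Matrix (Fin 2) (Fin 2) ℝ)
    (hJ : ∀ x, J x = !![pd 0 f x, pd 1 f x; pd 0 g x, pd 1 g x])
    (G : (Fin 2 → ℝ) → (Fin 2 → ℝ) → Fin 2 → ℝ)
    (hG : ∀ x y i, G x y i = -(1/2) * ∑ j, J x i j * y j)
    (N : (Fin 2 → ℝ) → Matrix (Fin 2) (Fin 2) ℝ)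
    (hN : ∀ x i j, N x i j = -(1/2) * J x i j)
    (P : (Fin 2 → ℝ) → (Fin 2 → ℝ) → Matrix (Fin 2) (Fin 2) ℝ)
    (hP : ∀ x y i j, P x y i j =
      -2 * pd j (fun x' => G x' y i) x
      + ∑ l, y l * pd l (fun x' => N x' i j) x
      + ∑ l, N x i l * N x l j)
    (Hessf Hessg : (Fin 2 → ℝ) → Matrix (Fin 2) (Fin 2) ℝ)
    (hHessf : ∀ x i j, Hessf x i j = pd j (fun x' => pd i f x') x)
    (hHessg : ∀ x i j, Hessg x i j = pd j (fun x' => pd i g x') x)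
    (M : (Fin 2 → ℝ) → (Fin 2 → ℝ) → Matrix (Fin 2) (Fin 2) ℝ)
    (hM : ∀ x y, M x y = !![(Hessf x *ᵥ y) 0, (Hessf x *ᵥ y) 1;
                            (Hessg x *ᵥ y) 0, (Hessg x *ᵥ y) 1]) :
    ∀ x y, P x y = (1/2 : ℝ) • M x y + (1/4 : ℝ) • (J x * J x) := by
  intro x y
  ext i j
  rw [hP, hM]
  fin_cases i <;> fin_cases j <;>
  · simp only [hN, hJ, hG, Fin.sum_univ_two, Fin.mk_zero, Fin.mk_one, Fin.isValue,
      Matrix.cons_val', Matrix.cons_val_zero, Matrix.cons_val_one, Matrix.head_cons,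
      Matrix.head_fin_const, Matrix.empty_val', Matrix.cons_val_fin_one,
      Matrix.smul_apply, Matrix.add_apply, Matrix.mul_apply, Matrix.of_apply,
      smul_eq_mul, hHessf, hHessg, Matrix.mulVec, dotProduct]
    first
    | linear_combination entry hf y 0 x
    | linear_combination entry hf y 1 x
    | linear_combination entry hg y 0 x
    | linear_combination entry hg y 1 x
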